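/- arXiv:2405.07835 — 6 statements merged into one kernel-verified Lean document; each statement's English description precedes it below -/
import Mathlib

section
/- Let x_1, …, x_m : Fin n → ℝ be monotone nondecreasing vectors and let μ : Fin n → ℝ be their coordinatewise mean, μ i = (1/m) ∑_{k=1}^m x_k i. Then for every y : Fin n → ℝ, ∑_{k=1}^m d(μ, x_k)² ≤ ∑_{k=1}^m d(y, x_k)², where d(a,b)² = min over permutations σ of Fin n of ∑_i (a i − b (σ i))². That is, the coordinatewise mean of the sorted vectors minimizes the sum of squared Wasserstein-type distances. -/
/-- The squared Wasserstein-type distance between two vectors `a b : Fin n → ℝ`: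
the minimum over all permutations `σ` of `Fin n` of `∑ i, (a i - b (σ i))²`. -/
noncomputable def wsq (n : ℕ) (a b : Fin n → ℝ) : ℝ :=
  ⨅ σ : Equiv.Perm (Fin n), ∑ i, (a i - b (σ i)) ^ 2

lemma wsq_le (n : ℕ) (a b : Fin n → ℝ) (σ : Equiv.Perm (Fin n)) :
    wsq n a b ≤ ∑ i, (a i - b (σ i)) ^ 2 :=
  ciInf_le ⟨0, by rintro _ ⟨τ, rfl⟩; positivity⟩ σ

lemma wsq_exists (n : ℕ) (a b : Fin n → ℝ) :
    ∃ σ : Equiv.Perm (Fin n), wsq n a b = ∑ i, (a i - b (σ i)) ^ 2 := by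
  obtain ⟨σ, hσ⟩ := Finite.exists_min (fun σ : Equiv.Perm (Fin n) => ∑ i, (a i - b (σ i)) ^ 2)
  exact ⟨σ, le_antisymm (wsq_le n a b σ) (le_ciInf hσ)⟩

/-- The coordinatewise mean of monotone nondecreasing vectors minimizes the sum of
squared Wasserstein-type distances: if `x 1, …, x m : Fin n → ℝ` are monotone
nondecreasing and `μ i = (1/m) ∑ k, x k i`, then for every `y : Fin n → ℝ`,
`∑ k, d(μ, x k)² ≤ ∑ k, d(y, x k)²`. -/
theorem topological_mean_minimizes (n m : ℕ) (hm : 1 ≤ m)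
    (x : Fin m → Fin n → ℝ) (hx : ∀ k, Monotone (x k))
    (μ : Fin n → ℝ) (hμ : ∀ i, μ i = (∑ k, x k i) / m)
    (y : Fin n → ℝ) :
    ∑ k, wsq n μ (x k) ≤ ∑ k, wsq n y (x k) := by
  have hm0 : (0:ℝ) < m := by exact_mod_cast hm
  choose σ hσ using fun k => wsq_exists n y (x k)
  set z : Fin m → Fin n → ℝ := fun k i => x k (σ k i) with hz
  set A : ℝ := ∑ k, ∑ i, (x k i) ^ 2 with hA
  set B : ℝ := ∑ i, (∑ k, x k i) ^ 2 with hB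
  set B' : ℝ := ∑ i, (∑ k, z k i) ^ 2 with hB'
  -- Step 1 & 2: LHS ≤ A - B/m
  have step1 : ∑ k, wsq n μ (x k) ≤ A - B / m := by
    calc ∑ k, wsq n μ (x k) ≤ ∑ k, ∑ i, (μ i - x k i) ^ 2 :=
          Finset.sum_le_sum fun k _ => wsq_le n μ (x k) 1
      _ = A - B / m := by
          rw [Finset.sum_comm, hA, Finset.sum_comm (γ := Fin m), hB, Finset.sum_div,
            ← Finset.sum_sub_distrib]
          refine Finset.sum_congr rfl fun i _ => ?_
          have : ∑ k, (μ i - x k i) ^ 2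
              = (m : ℝ) * μ i ^ 2 - 2 * μ i * (∑ k, x k i) + ∑ k, (x k i) ^ 2 := by
            rw [Finset.sum_congr rfl (fun k _ => by ring_nf :
              ∀ k ∈ Finset.univ, (μ i - x k i) ^ 2 = μ i ^ 2 - 2 * μ i * x k i + x k i ^ 2)]
            simp [Finset.sum_add_distrib, Finset.sum_sub_distrib, Finset.mul_sum, mul_comm]
          rw [this, hμ i]
          field_simp
          ring
  -- A is invariant under the permutations
  have hAz : ∑ k, ∑ i, (z k i) ^ 2 = A := by
    refine Finset.sum_congr rfl fun k _ => ?_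
    exact Fintype.sum_equiv (σ k) _ _ fun i => rfl
  -- Step 4: RHS ≥ A - B'/m
  have step4 : A - B' / m ≤ ∑ k, wsq n y (x k) := by
    have : ∑ k, wsq n y (x k) = ∑ i, ∑ k, (y i - z k i) ^ 2 := by
      rw [Finset.sum_comm]; exact Finset.sum_congr rfl fun k _ => hσ k
    rw [this, ← hAz, Finset.sum_comm (γ := Fin m), hB', Finset.sum_div,
      ← Finset.sum_sub_distrib]
    refine Finset.sum_le_sum fun i _ => ?_
    set T : ℝ := ∑ k, z k i with hT
    have hexp : ∑ k, (y i - z k i) ^ 2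
        = (m : ℝ) * y i ^ 2 - 2 * y i * T + ∑ k, (z k i) ^ 2 := by
      rw [Finset.sum_congr rfl (fun k _ => by ring_nf :
        ∀ k ∈ Finset.univ, (y i - z k i) ^ 2 = y i ^ 2 - 2 * y i * z k i + z k i ^ 2)]
      simp [Finset.sum_add_distrib, Finset.sum_sub_distrib, Finset.mul_sum, mul_comm, hT]
    rw [hexp]
    have key : (0:ℝ) ≤ ((m : ℝ) * y i - T) ^ 2 / m := by positivity
    have : ((m : ℝ) * y i - T) ^ 2 / m
        = (m : ℝ) * y i ^ 2 - 2 * y i * T + T ^ 2 / m := by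
      field_simp; ring
    nlinarith [key, this]
  -- Step 5: B' ≤ B
  have step5 : B' ≤ B := by
    have expand : ∀ v : Fin m → Fin n → ℝ,
        ∑ i, (∑ k, v k i) ^ 2 = ∑ k, ∑ l, ∑ i, v k i * v l i := by
      intro v
      calc ∑ i, (∑ k, v k i) ^ 2 = ∑ i, ∑ k, ∑ l, v k i * v l i :=
            Finset.sum_congr rfl fun i _ => by rw [sq, Finset.sum_mul_sum]
        _ = ∑ k, ∑ l, ∑ i, v k i * v l i := by
            rw [Finset.sum_comm]
            exact Finset.sum_congr rfl fun k _ => Finset.sum_comm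
    rw [hB, hB', expand, expand]
    refine Finset.sum_le_sum fun k _ => Finset.sum_le_sum fun l _ => ?_
    have h1 : ∑ i, z k i * z l i = ∑ j, x k j * x l ((σ l) ((σ k).symm j)) := by
      refine Fintype.sum_equiv (σ k) _ _ fun i => by simp [hz]
    rw [h1]
    exact ((hx k).monovary (hx l)).sum_mul_comp_perm_le_sum_mul (σ := (σ k).symm.trans (σ l))
  calc ∑ k, wsq n μ (x k) ≤ A - B / m := step1
    _ ≤ A - B' / m := by
        have : B' / m ≤ B / m := by gcongr
        linarith
    _ ≤ ∑ k, wsq n y (x k) := step4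
end

section
/- Cut property: Let G be a finite connected simple graph with an injective edge-weight function w : E(G) → ℝ, and let S be a nonempty proper subset of the vertex set of G such that at least one edge of G has one endpoint in S and one endpoint outside S. Then the unique edge of maximum weight among all edges with one endpoint in S and one endpoint in the complement of S belongs to the unique maximum spanning tree of G. -/
open SimpleGraph

/-- The total edge weight of a graph `T` with respect to the weight function `w`. -/
noncomputable def graphWeight {V : Type*} (w : Sym2 V → ℝ) (T : SimpleGraph V) : ℝ :=
  ∑ᶠ e ∈ T.edgeSet, w e

/-- `T` is a maximum spanning tree of `G` with respect to the edge weights `w`. -/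
def IsMaxSpanningTree {V : Type*} (G : SimpleGraph V) (w : Sym2 V → ℝ)
    (T : SimpleGraph V) : Prop :=
  T ≤ G ∧ T.IsTree ∧
    ∀ T' : SimpleGraph V, T' ≤ G → T'.IsTree → graphWeight w T' ≤ graphWeight w T

/-- The set of edges of `G` with one endpoint in `S` and one endpoint outside `S`. -/
def cutEdges {V : Type*} (G : SimpleGraph V) (S : Set V) : Set (Sym2 V) :=
  {e | e ∈ G.edgeSet ∧ ∃ u v, e = s(u, v) ∧ u ∈ S ∧ v ∉ S}

private lemma reachable_of_forall_adj_reachable {V : Type*} {G G' : SimpleGraph V}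
    (h : ∀ u v : V, G.Adj u v → G'.Reachable u v) :
    ∀ {u v : V}, G.Reachable u v → G'.Reachable u v := by
  intro u v hr
  obtain ⟨p⟩ := hr
  induction p with
  | nil => exact Reachable.refl _
  | cons ha _ ih => exact (h _ _ ha).trans ih

private lemma reachable_split_of_dart {V : Type*} {G : SimpleGraph V} :
    ∀ {a b : V} (p : G.Walk a b), p.IsPath → ∀ d ∈ p.darts,
      (G.deleteEdges {d.edge}).Reachable a d.fst ∧
        (G.deleteEdges {d.edge}).Reachable d.snd b := by
  intro a b p
  induction p with
  | nil => intro _ d hd; simp at hd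
  | @cons u c b' ha q ih =>
    intro hp d hd
    rw [SimpleGraph.Walk.cons_isPath_iff] at hp
    rw [SimpleGraph.Walk.darts_cons, List.mem_cons] at hd
    rcases hd with rfl | hd
    · refine ⟨Reachable.refl _, ?_⟩
      have hq : ∀ z ∈ q.edges, z ∈ (G.deleteEdges ({s(u, c)} : Set (Sym2 V))).edgeSet := by
        intro z hz
        rw [edgeSet_deleteEdges]
        refine ⟨q.edges_subset_edgeSet hz, ?_⟩
        intro hzz
        rw [Set.mem_singleton_iff] at hzz
        subst hzz
        exact hp.2 (q.fst_mem_support_of_mem_edges hz)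
      exact ⟨q.transfer _ hq⟩
    · obtain ⟨h1, h2⟩ := ih hp.1 d hd
      have hedge : d.edge ∈ q.edges := List.mem_map_of_mem hd
      have hne : s(u, c) ≠ d.edge := by
        intro h
        rw [← h] at hedge
        exact hp.2 (q.fst_mem_support_of_mem_edges hedge)
      have hadj : (G.deleteEdges ({d.edge} : Set (Sym2 V))).Adj u c := by
        rw [deleteEdges_adj]
        exact ⟨ha, by simpa using hne⟩
      exact ⟨hadj.reachable.trans h1, h2⟩

/-- Cut property: for a finite connected simple graph `G` with injective edge
weights and a nonempty proper vertex subset `S` crossed by at least one edge,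
the unique maximum-weight edge among the edges crossing the cut `(S, Sᶜ)`
belongs to every (hence the unique) maximum spanning tree of `G`. -/
theorem cut_property {V : Type*} [Fintype V] (G : SimpleGraph V) (hG : G.Connected)
    (w : Sym2 V → ℝ) (hw : Set.InjOn w G.edgeSet)
    (S : Set V) (hS : S.Nonempty) (hS' : S ≠ Set.univ)
    (e : Sym2 V) (he : e ∈ cutEdges G S)
    (hmax : ∀ f ∈ cutEdges G S, f ≠ e → w f < w e)
    (T : SimpleGraph V) (hT : IsMaxSpanningTree G w T) :
    e ∈ T.edgeSet := by
  classical
  by_contra he'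
  obtain ⟨heG, a, b, rfl, haS, hbS⟩ := he
  rw [SimpleGraph.mem_edgeSet] at heG
  have hab : a ≠ b := heG.ne
  obtain ⟨hTG, hTtree, hTmax⟩ := hT
  obtain ⟨p, hp, -⟩ := hTtree.existsUnique_path a b
  obtain ⟨d, hd, hdS, hdS'⟩ := p.exists_boundary_dart S haS hbS
  have hdedge : d.edge = s(d.fst, d.snd) := rfl
  have hfT : d.edge ∈ T.edgeSet :=
    p.edges_subset_edgeSet (List.mem_map_of_mem hd)
  have hfG : d.edge ∈ G.edgeSet := edgeSet_mono hTG hfT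
  have hfe : d.edge ≠ s(a, b) := fun h => he' (h ▸ hfT)
  have hfcut : d.edge ∈ cutEdges G S := ⟨hfG, d.fst, d.snd, hdedge, hdS, hdS'⟩
  have hwf : w d.edge < w s(a, b) := hmax _ hfcut hfe
  obtain ⟨hax, hyb⟩ := reachable_split_of_dart p hp d hd
  set T₀ := T.deleteEdges ({d.edge} : Set (Sym2 V)) with hT₀def
  have hbridge : ¬ T₀.Reachable d.fst d.snd := by
    have hbr := (isAcyclic_iff_forall_edge_isBridge.mp hTtree.IsAcyclic) hfT
    rw [hdedge, isBridge_iff] at hbr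
    exact hbr
  set T' := T₀ ⊔ SimpleGraph.edge a b with hT'def
  have hedgeT' : T'.edgeSet = (T.edgeSet \ {d.edge}) ∪ {s(a, b)} := by
    rw [hT'def, edgeSet_sup, hT₀def, edgeSet_deleteEdges, edge_edgeSet_of_ne hab]
  have hEdgeLe : SimpleGraph.edge a b ≤ G := by
    rw [← edgeSet_subset_edgeSet, edge_edgeSet_of_ne hab, Set.singleton_subset_iff]
    exact heG
  have hT'G : T' ≤ G := sup_le ((deleteEdges_le _).trans hTG) hEdgeLe
  have habT' : T'.Adj a b := by
    rw [hT'def, sup_adj, edge_adj]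
    exact Or.inr ⟨Or.inl ⟨rfl, rfl⟩, hab⟩
  have hraT' : T'.Reachable d.fst d.snd := by
    have h1 : T'.Reachable d.fst a := (hax.mono le_sup_left).symm
    have h3 : T'.Reachable b d.snd := (hyb.mono le_sup_left).symm
    exact h1.trans (habT'.reachable.trans h3)
  have hT'conn : T'.Connected := by
    rw [connected_iff]
    refine ⟨fun u v => ?_, hTtree.isConnected.nonempty⟩
    refine reachable_of_forall_adj_reachable (G := T) ?_
      (hTtree.isConnected.preconnected u v)
    intro u' v' huv
    by_cases h : s(u', v') = d.edge
    · rw [hdedge, Sym2.eq_iff] at h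
      rcases h with ⟨rfl, rfl⟩ | ⟨rfl, rfl⟩
      · exact hraT'
      · exact hraT'.symm
    · refine Adj.reachable ?_
      rw [hT'def, sup_adj, hT₀def, deleteEdges_adj]
      exact Or.inl ⟨huv, by simpa using h⟩
  have hT'ac : T'.IsAcyclic := by
    intro u c hc
    by_cases hec : s(a, b) ∈ c.edges
    · have hcyc := adj_and_reachable_delete_edges_iff_exists_cycle.mpr ⟨u, c, hc, hec⟩
      have hr : (T'.deleteEdges ({s(a, b)} : Set (Sym2 V))).Reachable a b := hcyc.2
      have hle : T'.deleteEdges ({s(a, b)} : Set (Sym2 V)) ≤ T₀ := by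
        rw [← edgeSet_subset_edgeSet, edgeSet_deleteEdges, hedgeT', hT₀def,
          edgeSet_deleteEdges]
        intro z hz
        rcases hz.1 with h | h
        · exact h
        · exact absurd h hz.2
      have hr0 : T₀.Reachable a b := hr.mono hle
      exact hbridge (hax.symm.trans (hr0.trans hyb.symm))
    · have hsub : ∀ z ∈ c.edges, z ∈ T.edgeSet := by
        intro z hz
        have hz' := c.edges_subset_edgeSet hz
        rw [hedgeT'] at hz'
        rcases hz' with h | h
        · exact h.1
        · rw [Set.mem_singleton_iff] at h
          exact absurd (h ▸ hz) hec
      exact hTtree.IsAcyclic (c.transfer T hsub) (hc.transfer hsub)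
  have hT'tree : T'.IsTree := ⟨hT'conn, hT'ac⟩
  have hdisj1 : Disjoint (T.edgeSet \ {d.edge}) ({d.edge} : Set (Sym2 V)) :=
    Set.disjoint_singleton_right.mpr (fun h => h.2 rfl)
  have hdisj2 : Disjoint (T.edgeSet \ {d.edge}) ({s(a, b)} : Set (Sym2 V)) :=
    Set.disjoint_singleton_right.mpr (fun h => he' h.1)
  have hwT : graphWeight w T = (∑ᶠ z ∈ T.edgeSet \ {d.edge}, w z) + w d.edge := by
    have hTeq : T.edgeSet = (T.edgeSet \ {d.edge}) ∪ {d.edge} := by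
      rw [Set.diff_union_self,
        Set.union_eq_self_of_subset_right (Set.singleton_subset_iff.mpr hfT)]
    rw [graphWeight]
    conv_lhs => rw [hTeq]
    rw [finsum_mem_union hdisj1 ((T.edgeSet \ {d.edge}).toFinite)
      (Set.finite_singleton _), finsum_mem_singleton]
  have hwT' : graphWeight w T' = (∑ᶠ z ∈ T.edgeSet \ {d.edge}, w z) + w s(a, b) := by
    rw [graphWeight, hedgeT', finsum_mem_union hdisj2 ((T.edgeSet \ {d.edge}).toFinite)
      (Set.finite_singleton _), finsum_mem_singleton]
  have hcontra := hTmax T' hT'G hT'tree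
  rw [hwT, hwT'] at hcontra
  linarith
end

section
/- Cycle property: Let G be a finite connected simple graph with an injective edge-weight function w : E(G) → ℝ, and let C be a cycle in G. Then the unique edge of minimum weight among the edges of C does not belong to the unique maximum spanning tree of G. -/
open SimpleGraph

/-- If `u` can reach `x` in `G`, then after deleting the edge `s(x,y)`, `u` can still
reach `x` or `y`. -/
private lemma reach_del_aux {V : Type*} {G : SimpleGraph V} (x y : V) :
    ∀ {u t : V}, G.Walk u t → t = x →
      (G.deleteEdges {s(x, y)}).Reachable u x ∨ (G.deleteEdges {s(x, y)}).Reachable u y := by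
  intro u t p
  induction p with
  | nil => rintro rfl; exact Or.inl (Reachable.refl _)
  | @cons a b _ h q ih =>
    intro ht
    by_cases hd : s(a, b) = s(x, y)
    · rw [Sym2.eq_iff] at hd
      rcases hd with ⟨rfl, rfl⟩ | ⟨rfl, rfl⟩
      · exact Or.inl (Reachable.refl _)
      · exact Or.inr (Reachable.refl _)
    · have hadj : (G.deleteEdges {s(x, y)}).Adj a b := by
        simp only [deleteEdges_adj, Set.mem_singleton_iff]
        exact ⟨h, hd⟩
      rcases ih ht with h1 | h1
      · exact Or.inl (hadj.reachable.trans h1)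
      · exact Or.inr (hadj.reachable.trans h1)

private lemma reach_del {V : Type*} {G : SimpleGraph V} {x y u : V}
    (p : G.Walk u x) :
    (G.deleteEdges {s(x, y)}).Reachable u x ∨ (G.deleteEdges {s(x, y)}).Reachable u y :=
  reach_del_aux x y p rfl

/-- A walk from inside `S` to outside `S` contains an edge crossing `S`. -/
private lemma exists_crossing {V : Type*} {G : SimpleGraph V} (S : Set V) :
    ∀ {a b : V} (p : G.Walk a b), a ∈ S → b ∉ S →
      ∃ u v, s(u, v) ∈ p.edges ∧ G.Adj u v ∧ u ∈ S ∧ v ∉ S := by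
  intro a b p
  induction p with
  | nil => intro ha hb; exact absurd ha hb
  | @cons u x b h q ih =>
    intro ha hb
    by_cases hm : x ∈ S
    · obtain ⟨u', v', h1, h2, h3, h4⟩ := ih hm hb
      exact ⟨u', v', by simp [h1], h2, h3, h4⟩
    · exact ⟨u, x, by simp, h, ha, hm⟩

/-- Cycle property: for a finite connected simple graph `G` with injective edge
weights and a cycle `c` in `G`, the unique minimum-weight edge of `c` does not
belong to any (in particular not to the unique) maximum spanning tree of `G`. -/
theorem cycle_property {V : Type*} [Fintype V] (G : SimpleGraph V) (hG : G.Connected)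
    (w : Sym2 V → ℝ) (hw : Set.InjOn w G.edgeSet)
    (v : V) (c : G.Walk v v) (hc : c.IsCycle)
    (e : Sym2 V) (he : e ∈ c.edges)
    (hmin : ∀ f ∈ c.edges, f ≠ e → w e < w f)
    (T : SimpleGraph V) (hT : IsMaxSpanningTree G w T) :
    e ∉ T.edgeSet := by
  classical
  obtain ⟨hTG, hTtree, hTmax⟩ := hT
  intro heT
  induction e using Sym2.ind with
  | _ x y =>
  have hxyT : T.Adj x y := heT
  set T₀ : SimpleGraph V := T.deleteEdges {s(x, y)} with hT₀def
  set S : Set V := {u | T₀.Reachable x u} with hSdef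
  have hxS : x ∈ S := Reachable.refl x
  -- every edge of the tree `T` is a bridge
  have hyS : y ∉ S := by
    intro hy
    have hb := isAcyclic_iff_forall_adj_isBridge.mp hTtree.IsAcyclic hxyT
    exact hb hy
  -- produce a walk from x to y inside the cycle avoiding the edge s(x,y)
  have hx : x ∈ c.support := c.fst_mem_support_of_mem_edges he
  set c' : G.Walk x x := c.rotate x hx with hc'def
  have hc' : c'.IsCycle := hc.rotate hx
  have hce : ∀ g, g ∈ c'.edges ↔ g ∈ c.edges := fun g => (c.rotate_edges x hx).mem_iff
  have he' : s(x, y) ∈ c'.edges := (hce _).mpr he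
  have hy : y ∈ c'.support := c'.snd_mem_support_of_mem_edges he'
  have hnd : (((c'.takeUntil y hy).append (c'.dropUntil y hy)).edges).Nodup := by
    rw [c'.take_spec hy]
    exact hc'.isTrail.edges_nodup
  rw [SimpleGraph.Walk.edges_append, List.nodup_append] at hnd
  obtain ⟨p, hpe, hpc⟩ :
      ∃ p : G.Walk x y, s(x, y) ∉ p.edges ∧ ∀ g ∈ p.edges, g ∈ c.edges := by
    by_cases hq : s(x, y) ∈ (c'.takeUntil y hy).edges
    · refine ⟨(c'.dropUntil y hy).reverse, ?_, ?_⟩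
      · rw [SimpleGraph.Walk.edges_reverse, List.mem_reverse]
        exact fun hr => hnd.2.2 _ hq _ hr rfl
      · intro g hg
        rw [SimpleGraph.Walk.edges_reverse, List.mem_reverse] at hg
        exact (hce _).mp (c'.edges_dropUntil_subset hy hg)
    · exact ⟨c'.takeUntil y hy, hq,
        fun g hg => (hce _).mp (c'.edges_takeUntil_subset hy hg)⟩
  -- crossing edge
  obtain ⟨a, b, hfc, hab, haS, hbS⟩ := exists_crossing S p hxS hyS
  have hfe : s(a, b) ≠ s(x, y) := fun h => hpe (h ▸ hfc)
  have hfcyc : s(a, b) ∈ c.edges := hpc _ hfc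
  have hfT₀ : s(a, b) ∉ T₀.edgeSet := by
    intro hf
    exact hbS (haS.trans (SimpleGraph.Adj.reachable hf))
  have hfT : s(a, b) ∉ T.edgeSet := by
    intro hf
    apply hfT₀
    rw [edgeSet_deleteEdges]
    exact ⟨hf, by simpa using hfe⟩
  -- the improved tree
  set T' : SimpleGraph V := T₀ ⊔ fromEdgeSet {s(a, b)} with hT'def
  have hT'adj : T'.Adj a b := by
    rw [hT'def, sup_adj]
    exact Or.inr ((fromEdgeSet_adj _).mpr ⟨Set.mem_singleton _, hab.ne⟩)
  have hT'edge : T'.edgeSet = (T.edgeSet \ {s(x, y)}) ∪ {s(a, b)} := by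
    rw [hT'def, edgeSet_sup, edgeSet_deleteEdges, edgeSet_fromEdgeSet]
    congr 1
    ext g
    simp only [Set.mem_diff, Set.mem_singleton_iff, Set.mem_setOf_eq]
    constructor
    · exact fun h => h.1
    · rintro rfl
      exact ⟨rfl, by simp [hab.ne]⟩
  have hT₀le : T₀ ≤ T' := le_sup_left
  have hT'G : T' ≤ G := by
    apply sup_le ((T.deleteEdges_le _).trans hTG)
    intro u u' h
    rw [fromEdgeSet_adj, Set.mem_singleton_iff] at h
    have : s(u, u') ∈ G.edgeSet := h.1 ▸ hab
    exact this
  -- connectivity of T'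
  have hby : T₀.Reachable b y := by
    rcases reach_del (y := y) (hTtree.isConnected.preconnected b x).some with h' | h'
    · exact absurd h'.symm hbS
    · exact h'
  have key : ∀ u, T'.Reachable u x := by
    intro u
    rcases reach_del (y := y) (hTtree.isConnected.preconnected u x).some with h' | h'
    · exact h'.mono hT₀le
    · -- u ~ y ~ b ~ a ~ x
      refine ((h'.mono hT₀le).trans ((hby.symm.mono hT₀le).trans ?_))
      exact (hT'adj.symm.reachable).trans ((haS.symm).mono hT₀le)
  have hT'conn : T'.Connected := by
    rw [connected_iff]
    exact ⟨fun u u' => (key u).trans (key u').symm, hG.nonempty⟩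
  -- acyclicity of T'
  have hT'minus : T' \ fromEdgeSet {s(a, b)} = T₀ := by
    rw [← edgeSet_inj, edgeSet_sdiff, hT'edge, edgeSet_fromEdgeSet, edgeSet_deleteEdges]
    ext g
    simp only [Set.mem_diff, Set.mem_union, Set.mem_singleton_iff, Set.mem_setOf_eq]
    constructor
    · rintro ⟨h1 | h1, h2⟩
      · exact h1
      · exact absurd ⟨h1, by simp [h1, hab.ne]⟩ h2
    · intro h1
      refine ⟨Or.inl h1, ?_⟩
      rintro ⟨rfl, -⟩
      exact hfT₀ (by rw [edgeSet_deleteEdges]; exact ⟨h1.1, h1.2⟩)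
  have hbridge : T'.IsBridge s(a, b) := by
    rw [isBridge_iff, show T'.deleteEdges {s(a, b)} = T' \ fromEdgeSet {s(a, b)} from rfl, hT'minus]
    exact fun h => hbS (haS.trans h)
  have hT'acyc : T'.IsAcyclic := by
    intro u d hd
    by_cases hfd : s(a, b) ∈ d.edges
    · exact hbridge.notMem_edges_of_isCycle hd hfd
    · have hsub : ∀ g ∈ d.edges, g ∈ T.edgeSet := by
        intro g hg
        have : g ∈ T'.edgeSet := d.edges_subset_edgeSet hg
        rw [hT'edge] at this
        rcases this with h1 | h1
        · exact h1.1
        · exact absurd (h1 ▸ hg) hfd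
      exact hTtree.IsAcyclic (d.transfer T hsub) (hd.transfer hsub)
  have hT'tree : T'.IsTree := ⟨hT'conn, hT'acyc⟩
  -- weight comparison
  have hfin : (T.edgeSet \ {s(x, y)}).Finite := Set.toFinite _
  have h1 : graphWeight w T = w s(x, y) + ∑ᶠ g ∈ T.edgeSet \ {s(x, y)}, w g := by
    have hins : T.edgeSet = insert s(x, y) (T.edgeSet \ {s(x, y)}) := by
      rw [Set.insert_diff_singleton, Set.insert_eq_self.mpr heT]
    rw [graphWeight]
    conv_lhs => rw [hins]
    rw [finsum_mem_insert _ (fun h => h.2 rfl) hfin]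
  have h2 : graphWeight w T' = w s(a, b) + ∑ᶠ g ∈ T.edgeSet \ {s(x, y)}, w g := by
    rw [graphWeight, hT'edge, Set.union_singleton,
      finsum_mem_insert _ (fun h => hfT h.1) hfin]
  have hlt : w s(x, y) < w s(a, b) := hmin _ hfcyc hfe
  have := hTmax T' hT'G hT'tree
  rw [h1, h2] at this
  linarith
end

section
/- Births occur at maximum spanning tree weights: Let p ≥ 2, let w be an injective edge-weight function on the complete graph K_p, let T be the unique maximum spanning tree of (K_p, w), and for ε ∈ ℝ let G_ε be the threshold graph with edge set {e : w(e) > ε}. Then for every ε, the number of connected components of G_ε equals 1 + #{e ∈ E(T) : w(e) ≤ ε}. In particular, the zeroth Betti number of the graph filtration increases by exactly one as the threshold passes each maximum spanning tree edge weight. -/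
open SimpleGraph

/-- The number of connected components (zeroth Betti number) of a simple graph. -/
noncomputable def numComp {V : Type*} (G : SimpleGraph V) : ℕ :=
  Nat.card G.ConnectedComponent

/-- The threshold graph of a weighted simple graph at level `ε`: the spanning
subgraph whose edges are the edges of `G` of weight strictly greater than `ε`. -/
def thresholdGraph {V : Type*} (G : SimpleGraph V) (w : Sym2 V → ℝ) (ε : ℝ) :
    SimpleGraph V :=
  SimpleGraph.fromEdgeSet {e | e ∈ G.edgeSet ∧ ε < w e}

/-! ### Auxiliary lemmas -/

variable {V : Type*}

/-- Reachability in `H` follows from reachability in `G` if every `G`-edge has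
`H`-reachable endpoints. -/
lemma reachable_of_forall_adj {G H : SimpleGraph V} (h : ∀ a b : V, G.Adj a b → H.Reachable a b)
    {u v : V} (huv : G.Reachable u v) : H.Reachable u v := by
  obtain ⟨p⟩ := huv
  induction p with
  | nil => exact Reachable.refl _
  | cons ha _ ih => exact (h _ _ ha).trans ih

/-- After deleting the edge `s(x,y)`, any vertex `u` that could reach `v` can still
reach `v`, or can reach one of the endpoints `x`, `y`. -/
lemma reachable_delete_or (F : SimpleGraph V) (x y : V) {u v : V}
    (h : F.Reachable u v) :
    (F.deleteEdges {s(x,y)}).Reachable u v ∨ (F.deleteEdges {s(x,y)}).Reachable u x ∨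
      (F.deleteEdges {s(x,y)}).Reachable u y := by
  obtain ⟨p⟩ := h
  induction p with
  | nil => exact Or.inl (Reachable.refl _)
  | @cons u z v ha q ih =>
    by_cases he : s(u,z) = s(x,y)
    · rw [Sym2.eq_iff] at he
      rcases he with ⟨rfl, rfl⟩ | ⟨rfl, rfl⟩
      · exact Or.inr (Or.inl (Reachable.refl _))
      · exact Or.inr (Or.inr (Reachable.refl _))
    · have ha' : (F.deleteEdges {s(x,y)}).Adj u z := by
        rw [deleteEdges_adj]
        exact ⟨ha, by simpa using he⟩
      rcases ih with h1 | h1 | h1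
      · exact Or.inl (ha'.reachable.trans h1)
      · exact Or.inr (Or.inl (ha'.reachable.trans h1))
      · exact Or.inr (Or.inr (ha'.reachable.trans h1))

/-- If a trail from `u` to `v` uses an edge `f = s(x,y)`, then after deleting `f`,
`u` can reach one endpoint of `f` and the other endpoint can reach `v`. -/
lemma exists_reach_of_mem_edges {F : SimpleGraph V} {u v : V} (p : F.Walk u v)
    (hp : p.IsTrail) {f : Sym2 V} (hf : f ∈ p.edges) :
    ∃ x y : V, f = s(x,y) ∧ (F.deleteEdges {f}).Reachable u x ∧
      (F.deleteEdges {f}).Reachable y v := by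
  induction p with
  | nil => simp at hf
  | @cons u z v ha q ih =>
    rw [Walk.edges_cons, List.mem_cons] at hf
    have htq : q.IsTrail := hp.of_cons
    have hnodup := hp.edges_nodup
    rw [Walk.edges_cons, List.nodup_cons] at hnodup
    rcases hf with rfl | hf
    · refine ⟨u, z, rfl, Reachable.refl _, ?_⟩
      refine ⟨q.transfer _ fun e he => ?_⟩
      rw [edgeSet_deleteEdges]
      refine ⟨q.edges_subset_edgeSet he, ?_⟩
      simp only [Set.mem_singleton_iff]
      rintro rfl
      exact hnodup.1 he
    · obtain ⟨x, y, rfl, hux, hyv⟩ := ih htq hf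
      have hne : s(u,z) ≠ s(x,y) := fun h => hnodup.1 (h ▸ hf)
      have ha' : (F.deleteEdges {s(x,y)}).Adj u z := by
        rw [deleteEdges_adj]
        exact ⟨ha, by simpa using hne⟩
      exact ⟨x, y, rfl, ha'.reachable.trans hux, hyv⟩

/-- Deleting a bridge increases the number of connected components by one. -/
lemma card_cc_delete_bridge [Finite V] (F : SimpleGraph V) {a b : V} (hab : F.Adj a b)
    (hnr : ¬(F.deleteEdges {s(a,b)}).Reachable a b) :
    Nat.card (F.deleteEdges {s(a,b)}).ConnectedComponent
      = Nat.card F.ConnectedComponent + 1 := by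
  classical
  set F' := F.deleteEdges {s(a,b)} with hF'
  have hle : F' ≤ F := deleteEdges_le _
  let φ : F'.ConnectedComponent → F.ConnectedComponent :=
    ConnectedComponent.map (Hom.ofLE hle)
  let ψ : F'.ConnectedComponent → F.ConnectedComponent ⊕ Unit :=
    fun c => if c = F'.connectedComponentMk b then Sum.inr () else Sum.inl (φ c)
  have hφ : ∀ v : V, φ (F'.connectedComponentMk v) = F.connectedComponentMk v := fun v => rfl
  have hbij : Function.Bijective ψ := by
    constructor
    · intro c1 c2 h
      induction c1 using ConnectedComponent.ind with | _ x =>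
      induction c2 using ConnectedComponent.ind with | _ y =>
      by_cases h1 : F'.connectedComponentMk x = F'.connectedComponentMk b <;>
        by_cases h2 : F'.connectedComponentMk y = F'.connectedComponentMk b
      · rw [h1, h2]
      · exact absurd h (by simp [ψ, if_pos h1, if_neg h2])
      · exact absurd h (by simp [ψ, if_neg h1, if_pos h2])
      · simp only [ψ, if_neg h1, if_neg h2, Sum.inl.injEq, hφ] at h
        have hxy : F.Reachable x y := ConnectedComponent.eq.mp h
        have hx := reachable_delete_or F a b hxy
        have hy := reachable_delete_or F a b hxy.symm
        rw [ConnectedComponent.eq]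
        have hxb : ¬F'.Reachable x b := fun hr => h1 (ConnectedComponent.sound hr)
        have hyb : ¬F'.Reachable y b := fun hr => h2 (ConnectedComponent.sound hr)
        rcases hx with hx | hx | hx
        · exact hx
        · rcases hy with hy | hy | hy
          · exact hy.symm
          · exact hx.trans hy.symm
          · exact absurd hy hyb
        · exact absurd hx hxb
    · rintro (c | ⟨⟩)
      · induction c using ConnectedComponent.ind with | _ x =>
        by_cases hx : F'.Reachable x b
        · refine ⟨F'.connectedComponentMk a, ?_⟩
          have : F'.connectedComponentMk a ≠ F'.connectedComponentMk b := by
            rw [Ne, ConnectedComponent.eq]; exact hnr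
          simp only [ψ, if_neg this, hφ]
          congr 1
          rw [ConnectedComponent.eq]
          exact hab.reachable.trans ((hx.mono hle).symm)
        · refine ⟨F'.connectedComponentMk x, ?_⟩
          have : F'.connectedComponentMk x ≠ F'.connectedComponentMk b := by
            rw [Ne, ConnectedComponent.eq]; exact hx
          simp only [ψ, if_neg this, hφ]
      · exact ⟨F'.connectedComponentMk b, by simp [ψ]⟩
  rw [Nat.card_eq_of_bijective ψ hbij, Nat.card_sum]
  simp

lemma card_cc_of_connected {G : SimpleGraph V} (h : G.Connected) :
    Nat.card G.ConnectedComponent = 1 := by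
  have h1 := h.preconnected.subsingleton_connectedComponent
  have h2 : Nonempty G.ConnectedComponent := by
    obtain ⟨v⟩ := h.nonempty
    exact ⟨G.connectedComponentMk v⟩
  exact Nat.card_eq_one_iff_unique.mpr ⟨h1, h2⟩

lemma isAcyclic_anti {G H : SimpleGraph V} (hle : G ≤ H) (h : H.IsAcyclic) : G.IsAcyclic := by
  intro v c hc
  exact h (c.mapLe hle) (hc.mapLe _)

/-- Deleting `k` edges from a tree yields a graph with `1 + k` connected components. -/
lemma card_cc_tree_deleteEdges [Finite V] {T : SimpleGraph V} (hT : T.IsTree) :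
    ∀ S : Finset (Sym2 V), ↑S ⊆ T.edgeSet →
      Nat.card (T.deleteEdges ↑S).ConnectedComponent = 1 + S.card := by
  classical
  intro S
  induction S using Finset.induction_on with
  | empty => intro _; simp [card_cc_of_connected hT.1]
  | @insert f S' hfS ih =>
    induction f using Sym2.ind with | _ a b =>
    intro hsub
    have hsub' : ↑S' ⊆ T.edgeSet := by
      intro e he; exact hsub (by simp [he])
    have hmem : s(a,b) ∈ T.edgeSet := hsub (by simp)
    set F := T.deleteEdges ↑S' with hF
    have hFe : s(a,b) ∈ F.edgeSet := by
      rw [edgeSet_deleteEdges]; exact ⟨hmem, hfS⟩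
    have hFadj : F.Adj a b := hFe
    have hFac : F.IsAcyclic := isAcyclic_anti (deleteEdges_le _) hT.2
    have hbridge : F.IsBridge s(a,b) :=
      isAcyclic_iff_forall_edge_isBridge.mp hFac hFe
    have hnr : ¬(F.deleteEdges {s(a,b)}).Reachable a b := isBridge_iff.mp hbridge
    have heq : T.deleteEdges ↑(insert s(a,b) S') = F.deleteEdges {s(a,b)} := by
      rw [hF, deleteEdges_deleteEdges]
      congr 1
      simp [Set.union_comm]
    rw [heq, card_cc_delete_bridge F hFadj hnr, ih hsub',
      Finset.card_insert_of_notMem hfS]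
    ring

/-- The key exchange lemma: if `T` is a maximum spanning tree of the complete graph and
`ε < w s(a,b)` for distinct `a b`, then `a` and `b` remain connected in `T` after
deleting all edges of `T` of weight `≤ ε`. -/
lemma key_lemma [Finite V] {w : Sym2 V → ℝ} {T : SimpleGraph V}
    (hTt : T.IsTree)
    (hTmax : ∀ T' : SimpleGraph V, T' ≤ ⊤ → T'.IsTree → graphWeight w T' ≤ graphWeight w T)
    {ε : ℝ} {a b : V} (hab : a ≠ b) (hwab : ε < w s(a,b)) :
    (T.deleteEdges {e ∈ T.edgeSet | w e ≤ ε}).Reachable a b := by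
  classical
  obtain ⟨P, hP, huniq⟩ := hTt.existsUnique_path a b
  suffices hall : ∀ g ∈ P.edges, ε < w g by
    refine ⟨P.transfer _ fun e he => ?_⟩
    rw [edgeSet_deleteEdges]
    exact ⟨P.edges_subset_edgeSet he,
      fun hmem => absurd (hall e he) (not_lt.2 hmem.2)⟩
  by_contra hcon
  push_neg at hcon
  obtain ⟨f, hfP, hfw⟩ := hcon
  obtain ⟨x, y, rfl, hax, hyb⟩ := exists_reach_of_mem_edges P hP.isTrail hfP
  set F' := T.deleteEdges {s(x,y)} with hF'
  have hfT : s(x,y) ∈ T.edgeSet := P.edges_subset_edgeSet hfP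
  have habT : s(a,b) ∉ T.edgeSet := by
    intro hmem
    have hadj : T.Adj a b := hmem
    have hpath : (Walk.cons hadj Walk.nil).IsPath := by simp [hab]
    have hPP := huniq _ hpath
    rw [← hPP] at hfP
    simp only [Walk.edges_cons, Walk.edges_nil, List.mem_singleton] at hfP
    rw [hfP] at hfw
    linarith
  have hnrab : ¬F'.Reachable a b := by
    rintro ⟨q0⟩
    obtain ⟨q, hq⟩ := q0.toPath
    have hqT : (q.mapLe (deleteEdges_le _)).IsPath := hq.mapLe _
    have hequ := huniq _ hqT
    have hmem : s(x,y) ∈ (q.mapLe (deleteEdges_le {s(x,y)} : F' ≤ T)).edges := hequ ▸ hfP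
    simp only [Walk.mapLe, Walk.edges_map, List.mem_map, Hom.coe_ofLE,
      Sym2.map_id', id] at hmem
    obtain ⟨e, he, rfl⟩ := hmem
    have := q.edges_subset_edgeSet he
    rw [edgeSet_deleteEdges] at this
    exact this.2 rfl
  set T' := F' ⊔ fromEdgeSet {s(a,b)} with hT'
  have hT'ab : T'.Adj a b := by
    rw [hT', sup_adj, fromEdgeSet_adj]
    exact Or.inr ⟨rfl, hab⟩
  have hF'le : F' ≤ T' := le_sup_left
  have hreach : ∀ z, T'.Reachable z a := by
    intro z
    have hz : T.Reachable z a := hTt.1.preconnected z a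
    rcases reachable_delete_or T x y hz with h1 | h1 | h1
    · exact h1.mono hF'le
    · exact (h1.mono hF'le).trans ((hax.mono hF'le).symm)
    · exact (h1.mono hF'le).trans ((hyb.mono hF'le).trans hT'ab.symm.reachable)
  have hT'conn : T'.Connected := by
    rw [connected_iff]
    exact ⟨fun u v => (hreach u).trans (hreach v).symm, ⟨a⟩⟩
  have hT'sdiff : T' \ fromEdgeSet {s(a,b)} = F' := by
    ext u v
    simp only [sdiff_adj, hT', sup_adj, fromEdgeSet_adj, Set.mem_singleton_iff]
    constructor
    · rintro ⟨h1 | h1, h2⟩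
      · exact h1
      · exact absurd h1 h2
    · intro h1
      refine ⟨Or.inl h1, ?_⟩
      rintro ⟨heq, -⟩
      have : s(u,v) ∈ T.edgeSet := (deleteEdges_le {s(x,y)} : F' ≤ T) h1
      exact habT (heq ▸ this)
  have hbridge : T'.IsBridge s(a,b) := by
    rw [isBridge_iff, deleteEdges, hT'sdiff]
    exact hnrab
  have hT'ac : T'.IsAcyclic := by
    intro v c hc
    by_cases hce : s(a,b) ∈ c.edges
    · exact hbridge.notMem_edges_of_isCycle hc hce
    · have hce' : ∀ e ∈ c.edges, e ∈ F'.edgeSet := by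
        intro e he
        have heT' := c.edges_subset_edgeSet he
        rw [hT', edgeSet_sup, edgeSet_fromEdgeSet] at heT'
        rcases heT' with h1 | h1
        · exact h1
        · exact absurd h1.1 (by rintro rfl; exact hce he)
      exact hTt.2 ((c.transfer F' hce').mapLe (deleteEdges_le _)) ((hc.transfer hce').mapLe _)
  have hedges : T'.edgeSet = (T.edgeSet \ {s(x,y)}) ∪ {s(a,b)} := by
    rw [hT', edgeSet_sup, edgeSet_fromEdgeSet, hF', edgeSet_deleteEdges]
    congr 1
    ext e
    simp only [Set.mem_diff, Set.mem_singleton_iff, Set.mem_setOf_eq, and_iff_left_iff_imp]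
    rintro rfl
    simp [hab]
  have h1 : graphWeight w T' = (∑ᶠ e ∈ T.edgeSet \ {s(x,y)}, w e) + w s(a,b) := by
    rw [graphWeight, hedges,
      finsum_mem_union (Set.disjoint_singleton_right.mpr (fun h => habT h.1))
        (Set.toFinite _) (Set.toFinite _), finsum_mem_singleton]
  have h2 : graphWeight w T = (∑ᶠ e ∈ T.edgeSet \ {s(x,y)}, w e) + w s(x,y) := by
    conv_lhs => rw [graphWeight,
      ← Set.diff_union_of_subset (Set.singleton_subset_iff.mpr hfT)]
    rw [finsum_mem_union Set.disjoint_sdiff_left (Set.toFinite _) (Set.toFinite _),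
      finsum_mem_singleton]
  have hle := hTmax T' le_top ⟨hT'conn, hT'ac⟩
  rw [h1, h2] at hle
  linarith

/-- Connected components are in bijection for graphs with the same reachability relation. -/
def ccEquiv {G H : SimpleGraph V} (h : ∀ u v : V, G.Reachable u v ↔ H.Reachable u v) :
    G.ConnectedComponent ≃ H.ConnectedComponent where
  toFun := ConnectedComponent.lift (fun v => H.connectedComponentMk v)
    (fun u v p _ => ConnectedComponent.sound ((h u v).1 p.reachable))
  invFun := ConnectedComponent.lift (fun v => G.connectedComponentMk v)
    (fun u v p _ => ConnectedComponent.sound ((h u v).2 p.reachable))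
  left_inv := by apply ConnectedComponent.ind; intro v; rfl
  right_inv := by apply ConnectedComponent.ind; intro v; rfl

/-- Births occur at maximum spanning tree weights: for the complete graph `K_p`
(`p ≥ 2`) with injective edge weights `w` and maximum spanning tree `T`, the
number of connected components of the threshold graph `G_ε` equals
`1 + #{e ∈ E(T) : w e ≤ ε}` for every threshold `ε`. -/
theorem births_at_mst_weights (p : ℕ) (hp : 2 ≤ p) (w : Sym2 (Fin p) → ℝ)
    (hw : Set.InjOn w (⊤ : SimpleGraph (Fin p)).edgeSet)
    (T : SimpleGraph (Fin p)) (hT : IsMaxSpanningTree ⊤ w T) (ε : ℝ) :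
    numComp (thresholdGraph ⊤ w ε) = 1 + {e ∈ T.edgeSet | w e ≤ ε}.ncard := by
  classical
  obtain ⟨hTle, hTt, hTmax⟩ := hT
  set S : Set (Sym2 (Fin p)) := {e ∈ T.edgeSet | w e ≤ ε} with hS
  set Tε := T.deleteEdges S with hTε
  have key : ∀ a b : Fin p, (thresholdGraph ⊤ w ε).Adj a b → Tε.Reachable a b := by
    intro a b hadj
    rw [thresholdGraph, fromEdgeSet_adj] at hadj
    exact key_lemma hTt hTmax hadj.2 hadj.1.2
  have hle : ∀ a b : Fin p, Tε.Adj a b → (thresholdGraph ⊤ w ε).Reachable a b := by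
    intro a b hadj
    rw [hTε, deleteEdges_adj] at hadj
    refine Adj.reachable ?_
    rw [thresholdGraph, fromEdgeSet_adj]
    refine ⟨⟨?_, ?_⟩, hadj.1.ne⟩
    · simp [hadj.1.ne]
    · by_contra hc
      exact hadj.2 ⟨hadj.1, not_lt.mp hc⟩
  have hiff : ∀ u v : Fin p, (thresholdGraph ⊤ w ε).Reachable u v ↔ Tε.Reachable u v :=
    fun u v => ⟨reachable_of_forall_adj key, reachable_of_forall_adj hle⟩
  have hfin : S.Finite := Set.toFinite S
  have hcount := card_cc_tree_deleteEdges hTt hfin.toFinset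
    (by rw [Set.Finite.coe_toFinset]; exact fun e he => he.1)
  rw [Set.Finite.coe_toFinset] at hcount
  rw [numComp, Nat.card_congr (ccEquiv hiff), hTε, hcount,
    Set.ncard_eq_toFinset_card _ hfin]
end

section
/- Deaths occur at non-tree weights: Let p ≥ 2, let w be an injective edge-weight function on the complete graph K_p, let T be the unique maximum spanning tree of (K_p, w), and for ε ∈ ℝ let G_ε be the threshold graph with edge set {e : w(e) > ε}. Then for every ε, the cycle rank satisfies β₁(G_ε) = #{e ∈ E(K_p) ∖ E(T) : w(e) > ε}. In particular, the first Betti number of the graph filtration decreases by exactly one as the threshold passes each non-maximum-spanning-tree edge weight. -/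
open SimpleGraph

/-- The cycle rank (first Betti number) `β₁(G) = m - p + c` of a finite simple
graph with `p` vertices, `m` edges and `c` connected components. -/
noncomputable def cycleRank {V : Type*} [Fintype V] (G : SimpleGraph V) : ℤ :=
  (G.edgeSet.ncard : ℤ) - (Fintype.card V : ℤ) + (numComp G : ℤ)

/-- Case analysis for reachability along a walk after deleting one edge. -/
lemma reach_delete_cases {V : Type*} {G : SimpleGraph V} (a b : V) {x y : V}
    (p : G.Walk x y) :
    (G.deleteEdges {s(a,b)}).Reachable x y
    ∨ ((G.deleteEdges {s(a,b)}).Reachable x a ∧ (G.deleteEdges {s(a,b)}).Reachable b y)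
    ∨ ((G.deleteEdges {s(a,b)}).Reachable x b ∧ (G.deleteEdges {s(a,b)}).Reachable a y) := by
  set D := G.deleteEdges {s(a,b)} with hD
  induction p with
  | nil => exact Or.inl (Reachable.refl _)
  | @cons x z y h p ih =>
    by_cases he : s(x, z) = s(a, b)
    · rw [Sym2.eq_iff] at he
      rcases he with ⟨rfl, rfl⟩ | ⟨rfl, rfl⟩
      · rcases ih with h1 | ⟨h1, h2⟩ | ⟨h1, h2⟩
        · exact Or.inr (Or.inl ⟨Reachable.refl _, h1⟩)
        · exact Or.inr (Or.inl ⟨Reachable.refl _, h2⟩)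
        · exact Or.inl h2
      · rcases ih with h1 | ⟨h1, h2⟩ | ⟨h1, h2⟩
        · exact Or.inr (Or.inr ⟨Reachable.refl _, h1⟩)
        · exact Or.inl h2
        · exact Or.inr (Or.inr ⟨Reachable.refl _, h2⟩)
    · have hadj : D.Adj x z := by
        rw [hD, deleteEdges_adj]
        exact ⟨h, by simpa using he⟩
      rcases ih with h1 | ⟨h1, h2⟩ | ⟨h1, h2⟩
      · exact Or.inl (hadj.reachable.trans h1)
      · exact Or.inr (Or.inl ⟨hadj.reachable.trans h1, h2⟩)
      · exact Or.inr (Or.inr ⟨hadj.reachable.trans h1, h2⟩)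

/-- Deleting a bridge increases the number of components by exactly one. -/
lemma numComp_deleteEdges_bridge {V : Type*} [Fintype V] {G : SimpleGraph V} {a b : V}
    (hab : G.Adj a b) (hnr : ¬ (G.deleteEdges {s(a,b)}).Reachable a b) :
    Nat.card (G.deleteEdges {s(a,b)}).ConnectedComponent
      = Nat.card G.ConnectedComponent + 1 := by
  classical
  set D := G.deleteEdges {s(a,b)} with hDdef
  have hle : D ≤ G := deleteEdges_le _
  haveI : Finite D.ConnectedComponent := Quot.finite _
  haveI : Finite G.ConnectedComponent := Quot.finite _
  haveI fD : Fintype D.ConnectedComponent := Fintype.ofFinite _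
  haveI fG : Fintype G.ConnectedComponent := Fintype.ofFinite _
  set φ : D.ConnectedComponent → G.ConnectedComponent :=
    ConnectedComponent.map (Hom.ofLE hle) with hφ
  have hφmk : ∀ x : V, φ (D.connectedComponentMk x) = G.connectedComponentMk x := fun x => rfl
  have key : ∀ x y : V, G.Reachable x y →
      D.Reachable x y ∨ (D.Reachable x a ∧ D.Reachable b y)
        ∨ (D.Reachable x b ∧ D.Reachable a y) := fun x y h =>
    h.elim fun p => reach_delete_cases a b p
  have hreach : ∀ x : V, G.Reachable x a ↔ (D.Reachable x a ∨ D.Reachable x b) := by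
    intro x
    constructor
    · intro h
      rcases key x a h with h1 | ⟨h1, _⟩ | ⟨h1, _⟩
      · exact Or.inl h1
      · exact Or.inl h1
      · exact Or.inr h1
    · rintro (h | h)
      · exact h.mono hle
      · exact (h.mono hle).trans hab.symm.reachable
  have hfiber : ∀ C : G.ConnectedComponent,
      (Finset.univ.filter (fun D' => φ D' = C)).card
        = if C = G.connectedComponentMk a then 2 else 1 := by
    intro C
    induction C using ConnectedComponent.ind with
    | _ z =>
    by_cases hz : G.connectedComponentMk z = G.connectedComponentMk a
    · rw [hz, if_pos rfl]
      have : (Finset.univ.filter (fun D' => φ D' = G.connectedComponentMk a))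
          = {D.connectedComponentMk a, D.connectedComponentMk b} := by
        ext C'
        induction C' using ConnectedComponent.ind with
        | _ x =>
        simp only [Finset.mem_filter, Finset.mem_univ, true_and, Finset.mem_insert,
          Finset.mem_singleton, hφmk, ConnectedComponent.eq]
        exact hreach x
      rw [this]
      rw [Finset.card_insert_of_notMem, Finset.card_singleton]
      simp only [Finset.mem_singleton, ConnectedComponent.eq]
      exact hnr
    · rw [if_neg hz]
      rw [Finset.card_eq_one]
      refine ⟨D.connectedComponentMk z, ?_⟩
      ext C'
      induction C' using ConnectedComponent.ind with
      | _ x =>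
      simp only [Finset.mem_filter, Finset.mem_univ, true_and, Finset.mem_singleton, hφmk,
        ConnectedComponent.eq]
      constructor
      · intro h
        rcases key x z h with h1 | ⟨h1, h2⟩ | ⟨h1, h2⟩
        · exact h1
        · exact absurd (ConnectedComponent.sound (((h2.mono hle).symm.trans
            hab.reachable.symm))) hz
        · exact absurd (ConnectedComponent.sound ((h2.mono hle).symm)) hz
      · intro h
        exact h.mono hle
  have hcard : Fintype.card D.ConnectedComponent
      = ∑ C : G.ConnectedComponent, (Finset.univ.filter (fun D' => φ D' = C)).card :=
    (Finset.card_eq_sum_card_fiberwise (fun x _ => Finset.mem_univ (φ x))).trans rfl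
  rw [Nat.card_eq_fintype_card, Nat.card_eq_fintype_card, hcard]
  simp only [hfiber]
  have : (∑ x : G.ConnectedComponent, if x = G.connectedComponentMk a then 2 else 1)
      = (∑ _x : G.ConnectedComponent, 1)
        + ∑ x : G.ConnectedComponent, if x = G.connectedComponentMk a then 1 else 0 := by
    rw [← Finset.sum_add_distrib]
    apply Finset.sum_congr rfl
    intro x _
    by_cases h : x = G.connectedComponentMk a <;> simp [h]
  rw [this, Finset.sum_ite_eq' Finset.univ (G.connectedComponentMk a) (fun _ => 1),
    if_pos (Finset.mem_univ _), Finset.sum_const, Finset.card_univ, smul_eq_mul, mul_one]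

/-- Subgraphs of acyclic graphs are acyclic. -/
lemma isAcyclic_of_le {V : Type*} {G H : SimpleGraph V} (h : H ≤ G) (hG : G.IsAcyclic) :
    H.IsAcyclic := by
  intro v c hc
  exact hG (c.transfer G fun e he => edgeSet_mono h (c.edges_subset_edgeSet he))
    (hc.transfer _)

/-- Euler-type formula for forests: `m + c = |V|`. -/
lemma forest_card {V : Type*} [Fintype V] {F : SimpleGraph V} (hF : F.IsAcyclic) :
    F.edgeSet.ncard + Nat.card F.ConnectedComponent = Fintype.card V := by
  classical
  suffices H : ∀ (n : ℕ) (F : SimpleGraph V), F.IsAcyclic → F.edgeSet.ncard = n →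
      F.edgeSet.ncard + Nat.card F.ConnectedComponent = Fintype.card V from
    H _ F hF rfl
  intro n
  induction n with
  | zero =>
    intro F hF h0
    have : F.edgeSet = ∅ := (Set.ncard_eq_zero (Set.toFinite _)).mp h0
    have hbot : F = ⊥ := by rwa [← edgeSet_eq_empty]
    subst hbot
    rw [h0, zero_add]
    have : Function.Bijective ((⊥ : SimpleGraph V).connectedComponentMk) := by
      constructor
      · intro x y h
        exact reachable_bot.mp (ConnectedComponent.exact h)
      · exact Quot.mk_surjective
    rw [← Nat.card_eq_fintype_card]
    exact (Nat.card_eq_of_bijective _ this).symm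
  | succ n ih =>
    intro F hF hcard
    have hne : F.edgeSet.Nonempty := by
      rw [Set.nonempty_iff_ne_empty]
      intro h
      rw [h, Set.ncard_empty] at hcard
      omega
    obtain ⟨e, he⟩ := hne
    induction e using Sym2.ind with
    | _ a b =>
    have hab : F.Adj a b := he
    have hbridge : F.IsBridge s(a,b) :=
      (isAcyclic_iff_forall_edge_isBridge.mp hF) he
    have hnr : ¬ (F.deleteEdges {s(a,b)}).Reachable a b := by
      have := isBridge_iff.mp hbridge
      simpa [deleteEdges] using this
    set D := F.deleteEdges {s(a,b)} with hD
    have hDacyc : D.IsAcyclic := isAcyclic_of_le (deleteEdges_le _) hF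
    have hDedge : D.edgeSet = F.edgeSet \ {s(a,b)} := edgeSet_deleteEdges _
    have hDcard : D.edgeSet.ncard = n := by
      rw [hDedge, Set.ncard_diff_singleton_of_mem he, hcard]
      omega
    have := ih D hDacyc hDcard
    rw [hDcard, numComp_deleteEdges_bridge hab hnr] at this
    omega

/-- The edge-swap: removing `s(a,b)` and adding `s(u,v)` again yields a tree. -/
lemma exchange_tree {V : Type*} {T : SimpleGraph V} (hT : T.IsTree) {u v a b : V}
    (huv : u ≠ v) (hnuv : s(u,v) ∉ T.edgeSet)
    (hDuv : ¬ (T.deleteEdges {s(a,b)}).Reachable u v)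
    (hua : (T.deleteEdges {s(a,b)}).Reachable u a)
    (hbv : (T.deleteEdges {s(a,b)}).Reachable b v) :
    ∃ T' : SimpleGraph V, T'.IsTree
      ∧ T'.edgeSet = insert s(u,v) (T.edgeSet \ {s(a,b)}) := by
  classical
  set D := T.deleteEdges {s(a,b)} with hDdef
  set S : Set (Sym2 V) := insert s(u,v) (T.edgeSet \ {s(a,b)}) with hS
  have hedge : (fromEdgeSet S).edgeSet = S := by
    rw [edgeSet_fromEdgeSet]
    apply Set.diff_subset.antisymm
    intro e heS
    refine ⟨heS, ?_⟩
    rcases heS with rfl | ⟨heT, _⟩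
    · exact fun hed => huv (Sym2.isDiag_iff_proj_eq.mp hed)
    · exact T.not_isDiag_of_mem_edgeSet heT
  refine ⟨fromEdgeSet S, ?_, hedge⟩
  have hDle : D ≤ fromEdgeSet S := by
    rw [← edgeSet_subset_edgeSet, hedge, edgeSet_deleteEdges]
    exact Set.subset_insert _ _
  have hT'uv : (fromEdgeSet S).Adj u v := by
    rw [fromEdgeSet_adj]
    exact ⟨Set.mem_insert _ _, huv⟩
  constructor
  · -- connected
    have hxu : ∀ x : V, (fromEdgeSet S).Reachable x u := by
      intro x
      have hr : T.Reachable x u := hT.isConnected.preconnected x u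
      obtain ⟨P⟩ := hr
      rcases reach_delete_cases a b P with h1 | ⟨h1, _⟩ | ⟨h1, _⟩
      · exact h1.mono hDle
      · exact (h1.mono hDle).trans ((hua.mono hDle).symm)
      · exact ((h1.mono hDle).trans (hbv.mono hDle)).trans hT'uv.symm.reachable
    haveI : Nonempty V := ⟨u⟩
    exact Connected.mk fun x y => (hxu x).trans (hxu y).symm
  · -- acyclic
    intro x c hc
    by_cases he : s(u,v) ∈ c.edges
    · have hnb : ¬ (fromEdgeSet S).IsBridge s(u,v) := by
        rw [isBridge_iff_adj_and_forall_cycle_notMem hT'uv]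
        push_neg
        exact ⟨x, c, hc, he⟩
      rw [isBridge_iff] at hnb
      push_neg at hnb
      have hreach := hnb
      apply hDuv
      refine hreach.mono ?_
      intro x' y' hxy
      rw [deleteEdges_adj] at hxy
      obtain ⟨hxy1, hxy2⟩ := hxy
      rw [fromEdgeSet_adj] at hxy1
      have hne : s(x', y') ≠ s(u, v) := fun hh =>
        hxy2 (by rw [hh]; exact Set.mem_singleton _)
      rcases hxy1.1 with hh | ⟨heT, hne2⟩
      · exact absurd hh hne
      · rw [hDdef, deleteEdges_adj]
        exact ⟨heT, by simpa using hne2⟩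
    · have hsub : ∀ f ∈ c.edges, f ∈ T.edgeSet := by
        intro f hf
        have := c.edges_subset_edgeSet hf
        rw [hedge] at this
        rcases this with rfl | ⟨hfT, _⟩
        · exact absurd hf he
        · exact hfT
      exact hT.IsAcyclic (c.transfer T hsub) (hc.transfer _)

/-- Edges on the tree path between `u` and `v` in a maximum spanning tree have
weight at least `w s(u,v)`. -/
lemma weight_le_of_mem_path {V : Type*} [Fintype V] {w : Sym2 V → ℝ} {T : SimpleGraph V}
    (hT : IsMaxSpanningTree ⊤ w T) {u v : V} (P : T.Walk u v) (hP : P.IsPath)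
    {f : Sym2 V} (hf : f ∈ P.edges) : w s(u,v) ≤ w f := by
  classical
  obtain ⟨-, hTtree, hTmax⟩ := hT
  have huv : u ≠ v := by
    rintro rfl
    rw [Walk.isPath_iff_eq_nil] at hP
    subst hP
    simp at hf
  by_contra hlt
  push_neg at hlt
  have hfT : f ∈ T.edgeSet := P.edges_subset_edgeSet hf
  induction f using Sym2.ind with
  | _ a b =>
  have hfuv : s(a,b) ≠ s(u,v) := fun h => absurd (h ▸ hlt) (lt_irrefl _)
  by_cases huvT : s(u,v) ∈ T.edgeSet
  · have hadj : T.Adj u v := huvT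
    have hPeq : (⟨P, hP⟩ : T.Path u v) = ⟨hadj.toWalk, by simp [huv]⟩ :=
      hTtree.IsAcyclic.path_unique _ _
    have : P = hadj.toWalk := congrArg Subtype.val hPeq
    rw [this] at hf
    simp only [Adj.toWalk, Walk.edges_cons, Walk.edges_nil, List.mem_singleton] at hf
    exact absurd hf hfuv
  · set D := T.deleteEdges {s(a,b)} with hDdef
    have hDuv : ¬ D.Reachable u v := by
      rintro ⟨q⟩
      set qp := q.toPath with hqp
      have hQsub : ∀ e ∈ (qp : D.Walk u v).edges, e ∈ T.edgeSet := fun e he =>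
        edgeSet_mono (deleteEdges_le _) (Walk.edges_subset_edgeSet _ he)
      have hQ : ((qp : D.Walk u v).transfer T hQsub).IsPath := qp.2.transfer _
      have hPeq : (⟨P, hP⟩ : T.Path u v) = ⟨_, hQ⟩ := hTtree.IsAcyclic.path_unique _ _
      have hP' : P = (qp : D.Walk u v).transfer T hQsub := congrArg Subtype.val hPeq
      have : s(a,b) ∈ (qp : D.Walk u v).edges := by
        rw [hP'] at hf
        rwa [Walk.edges_transfer] at hf
      have := (qp : D.Walk u v).edges_subset_edgeSet this
      rw [edgeSet_deleteEdges] at this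
      exact this.2 rfl
    have hswap : ∃ T' : SimpleGraph V, T'.IsTree
        ∧ T'.edgeSet = insert s(u,v) (T.edgeSet \ {s(a,b)}) := by
      rcases reach_delete_cases a b P with h1 | ⟨h1, h2⟩ | ⟨h1, h2⟩
      · exact absurd h1 hDuv
      · exact exchange_tree hTtree huv huvT hDuv h1 h2
      · have hsw : s(b,a) = s(a,b) := Sym2.eq_swap
        obtain ⟨T', h1', h2'⟩ := exchange_tree hTtree huv huvT
          (by rw [hsw]; exact hDuv) (by rw [hsw]; exact h1) (by rw [hsw]; exact h2)
        exact ⟨T', h1', by rwa [hsw] at h2'⟩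
    obtain ⟨T', hT'tree, hT'edge⟩ := hswap
    have hfin : (T.edgeSet \ {s(a,b)}).Finite := Set.toFinite _
    have h1 : graphWeight w T' = w s(u,v) + ∑ᶠ e ∈ T.edgeSet \ {s(a,b)}, w e := by
      rw [graphWeight, hT'edge, finsum_mem_insert _ (fun h => huvT h.1) hfin]
    have h2 : graphWeight w T = w s(a,b) + ∑ᶠ e ∈ T.edgeSet \ {s(a,b)}, w e := by
      conv_lhs => rw [graphWeight, ← Set.insert_eq_of_mem hfT,
        ← Set.insert_diff_singleton]
      rw [finsum_mem_insert _ (fun h => h.2 rfl) hfin]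
    have := hTmax T' le_top hT'tree
    rw [h1, h2] at this
    linarith

/-- Deaths occur at non-tree weights: for the complete graph `K_p` (`p ≥ 2`) with
injective edge weights `w` and maximum spanning tree `T`, the cycle rank of the
threshold graph `G_ε` equals `#{e ∈ E(K_p) \ E(T) : w e > ε}` for every `ε`. -/
theorem deaths_at_nontree_weights (p : ℕ) (hp : 2 ≤ p) (w : Sym2 (Fin p) → ℝ)
    (hw : Set.InjOn w (⊤ : SimpleGraph (Fin p)).edgeSet)
    (T : SimpleGraph (Fin p)) (hT : IsMaxSpanningTree ⊤ w T) (ε : ℝ) :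
    cycleRank (thresholdGraph ⊤ w ε)
      = ({e ∈ (⊤ : SimpleGraph (Fin p)).edgeSet \ T.edgeSet | ε < w e}.ncard : ℤ) := by
  classical
  obtain ⟨hTle, hTtree, hTmax⟩ := hT
  set Gε := thresholdGraph ⊤ w ε with hGε
  set E : Set (Sym2 (Fin p)) := {e | e ∈ (⊤ : SimpleGraph (Fin p)).edgeSet ∧ ε < w e} with hE
  set A : Set (Sym2 (Fin p)) := {e | e ∈ T.edgeSet ∧ ε < w e} with hA
  set B : Set (Sym2 (Fin p)) := {e ∈ (⊤ : SimpleGraph (Fin p)).edgeSet \ T.edgeSet | ε < w e} with hB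
  set F := fromEdgeSet A with hF
  have hndiagE : ∀ e ∈ E, ¬ e.IsDiag := fun e he =>
    (⊤ : SimpleGraph (Fin p)).not_isDiag_of_mem_edgeSet he.1
  have hndiagA : ∀ e ∈ A, ¬ e.IsDiag := fun e he =>
    T.not_isDiag_of_mem_edgeSet he.1
  have hGεedge : Gε.edgeSet = E := by
    rw [hGε, thresholdGraph, edgeSet_fromEdgeSet]
    exact Set.diff_subset.antisymm (fun e he => ⟨he, hndiagE e he⟩)
  have hFedge : F.edgeSet = A := by
    rw [hF, edgeSet_fromEdgeSet]
    exact Set.diff_subset.antisymm (fun e he => ⟨he, hndiagA e he⟩)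
  have hFleT : F ≤ T := by
    rw [← edgeSet_subset_edgeSet, hFedge]
    exact fun e he => he.1
  have hFacyc : F.IsAcyclic := isAcyclic_of_le hFleT hTtree.IsAcyclic
  have hFle : F ≤ Gε := by
    rw [← edgeSet_subset_edgeSet, hFedge, hGεedge]
    exact fun e he => ⟨edgeSet_mono hTle he.1, he.2⟩
  -- key: every edge of `Gε` has its endpoints connected in `F`
  have hadjF : ∀ x y : Fin p, Gε.Adj x y → F.Reachable x y := by
    intro x y hxy
    have hxy' : s(x,y) ∈ E := by rw [← hGεedge]; exact hxy
    obtain ⟨P⟩ := hTtree.isConnected.preconnected x y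
    set Pp := P.toPath with hPp
    have hsub : ∀ f ∈ (Pp : T.Walk x y).edges, f ∈ F.edgeSet := by
      intro f hf
      rw [hFedge]
      refine ⟨(Pp : T.Walk x y).edges_subset_edgeSet hf, ?_⟩
      have hle := weight_le_of_mem_path ⟨hTle, hTtree, hTmax⟩ (Pp : T.Walk x y) Pp.2 hf
      exact lt_of_lt_of_le hxy'.2 hle
    exact ⟨(Pp : T.Walk x y).transfer F hsub⟩
  have hreach : ∀ x y : Fin p, Gε.Reachable x y ↔ F.Reachable x y := by
    intro x y
    constructor
    · rintro ⟨q⟩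
      induction q with
      | nil => exact Reachable.refl _
      | cons h p ih => exact (hadjF _ _ h).trans ih
    · exact fun h => h.mono hFle
  have hcomp : numComp Gε = numComp F :=
    Nat.card_congr (Quot.congrRight hreach)
  -- edge counting
  have hEsplit : E = A ∪ B := by
    ext e
    constructor
    · rintro ⟨he1, he2⟩
      by_cases heT : e ∈ T.edgeSet
      · exact Or.inl ⟨heT, he2⟩
      · exact Or.inr ⟨⟨he1, heT⟩, he2⟩
    · rintro (⟨he1, he2⟩ | ⟨⟨he1, _⟩, he2⟩)
      · exact ⟨edgeSet_mono hTle he1, he2⟩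
      · exact ⟨he1, he2⟩
  have hdisj : Disjoint A B := by
    rw [Set.disjoint_left]
    rintro e ⟨he1, -⟩ ⟨⟨-, he2⟩, -⟩
    exact he2 he1
  have hcardE : E.ncard = A.ncard + B.ncard := by
    rw [hEsplit, Set.ncard_union_eq hdisj (Set.toFinite _) (Set.toFinite _)]
  have hforest := forest_card (F := F) hFacyc
  rw [hFedge] at hforest
  have hVp : Fintype.card (Fin p) = p := Fintype.card_fin p
  rw [hVp] at hforest
  -- final arithmetic
  rw [cycleRank, hGεedge, hcardE, hcomp]
  have : (numComp F : ℤ) = (p : ℤ) - (A.ncard : ℤ) := by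
    rw [numComp]
    omega
  rw [this, hVp]
  push_cast
  ring
end

section
/- Triangle inequality for the permutation-matching distance: For all a, b, c : Fin n → ℝ, d(a, c) ≤ d(a, b) + d(b, c), where d(x, y) = sqrt(min over permutations σ of Fin n of ∑_i (x i − y (σ i))²). -/
/-- The Wasserstein-type distance `d(a,b) = sqrt (min_σ ∑ i (a i - b (σ i))²)`. -/
noncomputable def wdist (n : ℕ) (a b : Fin n → ℝ) : ℝ :=
  Real.sqrt (wsq n a b)

lemma minkowski_sum {ι : Type*} (s : Finset ι) (f g : ι → ℝ) :
    Real.sqrt (∑ i ∈ s, (f i + g i) ^ 2) ≤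
      Real.sqrt (∑ i ∈ s, f i ^ 2) + Real.sqrt (∑ i ∈ s, g i ^ 2) := by
  set A := Real.sqrt (∑ i ∈ s, f i ^ 2) with hA
  set B := Real.sqrt (∑ i ∈ s, g i ^ 2) with hB
  have hAn : (0:ℝ) ≤ A := Real.sqrt_nonneg _
  have hBn : (0:ℝ) ≤ B := Real.sqrt_nonneg _
  have hfs : (0:ℝ) ≤ ∑ i ∈ s, f i ^ 2 := Finset.sum_nonneg fun _ _ => sq_nonneg _
  have hgs : (0:ℝ) ≤ ∑ i ∈ s, g i ^ 2 := Finset.sum_nonneg fun _ _ => sq_nonneg _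
  have hCS : ∑ i ∈ s, f i * g i ≤ A * B := Real.sum_mul_le_sqrt_mul_sqrt s f g
  have key : ∑ i ∈ s, (f i + g i) ^ 2 ≤ (A + B) ^ 2 := by
    have h1 : ∑ i ∈ s, (f i + g i) ^ 2
        = ∑ i ∈ s, f i ^ 2 + 2 * (∑ i ∈ s, f i * g i) + ∑ i ∈ s, g i ^ 2 := by
      rw [Finset.mul_sum, ← Finset.sum_add_distrib, ← Finset.sum_add_distrib]
      exact Finset.sum_congr rfl fun i _ => by ring
    have h2 : (A + B) ^ 2 = ∑ i ∈ s, f i ^ 2 + 2 * (A * B) + ∑ i ∈ s, g i ^ 2 := by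
      have : A ^ 2 = ∑ i ∈ s, f i ^ 2 := Real.sq_sqrt hfs
      have hb : B ^ 2 = ∑ i ∈ s, g i ^ 2 := Real.sq_sqrt hgs
      nlinarith [this, hb]
    rw [h1, h2]
    linarith
  calc Real.sqrt (∑ i ∈ s, (f i + g i) ^ 2) ≤ Real.sqrt ((A + B) ^ 2) :=
        Real.sqrt_le_sqrt key
    _ = A + B := Real.sqrt_sq (by linarith)

/-- Triangle inequality for the permutation-matching distance:
`d(a, c) ≤ d(a, b) + d(b, c)` for all `a, b, c : Fin n → ℝ`. -/
theorem wdist_triangle (n : ℕ) (a b c : Fin n → ℝ) :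
    wdist n a c ≤ wdist n a b + wdist n b c := by
  obtain ⟨σ, hσ⟩ := wsq_exists n a b
  obtain ⟨τ, hτ⟩ := wsq_exists n b c
  have h1 : wdist n a c ≤ Real.sqrt (∑ i, (a i - c (τ (σ i))) ^ 2) :=
    Real.sqrt_le_sqrt (wsq_le n a c (σ.trans τ))
  have h2 : Real.sqrt (∑ i, (a i - c (τ (σ i))) ^ 2)
      ≤ Real.sqrt (∑ i, (a i - b (σ i)) ^ 2)
        + Real.sqrt (∑ i, (b (σ i) - c (τ (σ i))) ^ 2) := by
    have := minkowski_sum Finset.univ (fun i => a i - b (σ i))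
      (fun i => b (σ i) - c (τ (σ i)))
    simpa using this
  have h3 : ∑ i, (b (σ i) - c (τ (σ i))) ^ 2 = ∑ j, (b j - c (τ j)) ^ 2 :=
    Equiv.sum_comp σ (fun j => (b j - c (τ j)) ^ 2)
  simp only [wdist, hσ, hτ]
  calc wdist n a c ≤ _ := h1
    _ ≤ _ := h2
    _ = _ := by rw [h3]
end
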